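/- Let μ ∈ {1,−1} and n ≥ 1, and let A = J(μ,n) ∈ SL(n,ℂ). Then A is reversible in SL(n,ℂ) for every n (there exists g ∈ SL(n,ℂ) with gAg⁻¹ = A⁻¹). Moreover, A is strongly reversible in SL(n,ℂ) (a product of two involutions of SL(n,ℂ)) if and only if n ≢ 2 (mod 4). -/

import Mathlib

/-- The Jordan block `J(λ, m)`. -/
noncomputable def jordanBlock (lam : ℂ) (m : ℕ) : Matrix (Fin m) (Fin m) ℂ :=
  Matrix.of fun i j => if (j : ℕ) = (i : ℕ) then lam
    else if (j : ℕ) = (i : ℕ) + 1 then 1 else 0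

open Matrix Finset

namespace JBaux

noncomputable def Gm (mu : ℂ) (n : ℕ) : Matrix (Fin n) (Fin n) ℂ :=
  Matrix.of fun i j => mu ^ ((i:ℕ)+(j:ℕ)) * (-1:ℂ) ^ (j:ℕ) * ((j:ℕ).choose (i:ℕ) : ℂ)

lemma Gm_apply (mu : ℂ) (n : ℕ) (i j : Fin n) :
    Gm mu n i j = mu ^ ((i:ℕ)+(j:ℕ)) * (-1:ℂ) ^ (j:ℕ) * ((j:ℕ).choose (i:ℕ) : ℂ) := rfl

-- the key binomial identity
lemma key_sum (i j : ℕ) :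
    ∑ k ∈ range (j+1), ((-1:ℂ)^k * ((j.choose k : ℕ) : ℂ) * ((k.choose i : ℕ) : ℂ))
      = if i = j then (-1:ℂ)^i else 0 := by
  rcases le_or_gt i j with hij | hij
  · have hsub : ∑ k ∈ range (j+1), ((-1:ℂ)^k * (j.choose k : ℂ) * (k.choose i : ℂ))
        = ∑ k ∈ Ico i (j+1), ((-1:ℂ)^k * (j.choose k : ℂ) * (k.choose i : ℂ)) := by
      refine (Finset.sum_subset ?_ ?_).symm
      · intro k hk
        simp only [mem_Ico, mem_range] at *
        omega
      · intro k hk hk2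
        simp only [mem_Ico, mem_range] at *
        have : k < i := by omega
        rw [Nat.choose_eq_zero_of_lt this]
        simp
    rw [hsub, Finset.sum_Ico_eq_sum_range]
    have hlen : j + 1 - i = (j - i) + 1 := by omega
    rw [hlen]
    have hterm : ∀ m ∈ range ((j-i)+1),
        ((-1:ℂ)^(i+m) * (j.choose (i+m) : ℂ) * ((i+m).choose i : ℂ))
          = ((-1:ℂ)^i * (j.choose i : ℂ)) * ((-1:ℂ)^m * ((j-i).choose m : ℂ)) := by
      intro m hm
      simp only [mem_range] at hm
      have h1 : i + m ≤ j := by omega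
      have h2 : i ≤ i + m := Nat.le_add_right _ _
      have := Nat.choose_mul (n := j) h2
      rw [Nat.add_sub_cancel_left] at this
      have hc : ((j.choose (i+m)) : ℂ) * ((i+m).choose i : ℂ)
          = ((j.choose i) : ℂ) * ((j-i).choose m : ℂ) := by exact_mod_cast congrArg (fun t : ℕ => (t : ℂ)) this
      rw [pow_add]
      calc (-1:ℂ)^i * (-1:ℂ)^m * (j.choose (i+m) : ℂ) * ((i+m).choose i : ℂ)
          = (-1:ℂ)^i * (-1:ℂ)^m * ((j.choose (i+m) : ℂ) * ((i+m).choose i : ℂ)) := by ring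
        _ = (-1:ℂ)^i * (-1:ℂ)^m * ((j.choose i : ℂ) * ((j-i).choose m : ℂ)) := by rw [hc]
        _ = (-1:ℂ)^i * (j.choose i : ℂ) * ((-1:ℂ)^m * ((j-i).choose m : ℂ)) := by ring
    rw [Finset.sum_congr rfl hterm, ← Finset.mul_sum]
    have halt : ∑ m ∈ range ((j-i)+1), ((-1:ℂ)^m * ((j-i).choose m : ℂ))
        = if j - i = 0 then 1 else 0 := by
      have := @Int.alternating_sum_range_choose (j-i)
      have := congrArg (fun z : ℤ => (z : ℂ)) this
      push_cast at this
      simpa using this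
    rw [halt]
    rcases eq_or_lt_of_le hij with rfl | hlt
    · simp
    · rw [if_neg (by omega), if_neg (by omega)]
      ring
  · rw [if_neg (by omega : ¬ i = j)]
    refine Finset.sum_eq_zero fun k hk => ?_
    simp only [mem_range] at hk
    rw [Nat.choose_eq_zero_of_lt (show k < i by omega)]
    simp


lemma Gm_mul_Gm {mu : ℂ} (h2 : mu^2 = 1) (n : ℕ) : Gm mu n * Gm mu n = 1 := by
  ext i j
  rw [Matrix.mul_apply, Matrix.one_apply]
  have hterm : ∀ k : Fin n, Gm mu n i k * Gm mu n k j
      = (mu^((i:ℕ)+(j:ℕ)) * (-1:ℂ)^(j:ℕ)) *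
        ((-1:ℂ)^(k:ℕ) * (((j:ℕ).choose (k:ℕ) : ℕ) : ℂ) * (((k:ℕ).choose (i:ℕ) : ℕ) : ℂ)) := by
    intro k
    simp only [Gm_apply]
    have hmupow : mu ^ ((i:ℕ)+(k:ℕ)) * mu ^ ((k:ℕ)+(j:ℕ)) = mu ^ ((i:ℕ)+(j:ℕ)) := by
      rw [← pow_add]
      have he : (i:ℕ)+(k:ℕ) + ((k:ℕ)+(j:ℕ)) = 2*(k:ℕ) + ((i:ℕ)+(j:ℕ)) := by omega
      rw [he, pow_add, pow_mul, h2, one_pow, one_mul]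
    calc mu ^ ((i:ℕ)+(k:ℕ)) * (-1:ℂ) ^ (k:ℕ) * ((k:ℕ).choose (i:ℕ) : ℂ) *
          (mu ^ ((k:ℕ)+(j:ℕ)) * (-1:ℂ) ^ (j:ℕ) * ((j:ℕ).choose (k:ℕ) : ℂ))
        = (mu ^ ((i:ℕ)+(k:ℕ)) * mu ^ ((k:ℕ)+(j:ℕ))) * ((-1:ℂ)^(j:ℕ)) *
          ((-1:ℂ)^(k:ℕ) * ((j:ℕ).choose (k:ℕ) : ℂ) * ((k:ℕ).choose (i:ℕ) : ℂ)) := by ring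
      _ = (mu^((i:ℕ)+(j:ℕ))) * ((-1:ℂ)^(j:ℕ)) *
          ((-1:ℂ)^(k:ℕ) * ((j:ℕ).choose (k:ℕ) : ℂ) * ((k:ℕ).choose (i:ℕ) : ℂ)) := by rw [hmupow]
  rw [Finset.sum_congr rfl (fun k _ => hterm k), ← Finset.mul_sum]
  have hconv : ∑ k : Fin n, ((-1:ℂ)^(k:ℕ) * (((j:ℕ).choose (k:ℕ) : ℕ) : ℂ) * (((k:ℕ).choose (i:ℕ) : ℕ) : ℂ))
      = ∑ k ∈ range ((j:ℕ)+1), ((-1:ℂ)^k * (((j:ℕ).choose k : ℕ) : ℂ) * ((k.choose (i:ℕ) : ℕ) : ℂ)) := by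
    rw [Fin.sum_univ_eq_sum_range (fun k => ((-1:ℂ)^k * (((j:ℕ).choose k : ℕ) : ℂ) * ((k.choose (i:ℕ) : ℕ) : ℂ)))]
    refine (Finset.sum_subset ?_ ?_).symm
    · intro k hk; simp only [mem_range] at *; exact lt_of_lt_of_le hk (by omega)
    · intro k hk hk2; simp only [mem_range] at *
      rw [Nat.choose_eq_zero_of_lt (show (j:ℕ) < k by omega)]; simp
  rw [hconv, key_sum]
  by_cases hij : i = j
  · subst hij
    rw [if_pos rfl, if_pos rfl]
    have h1 : mu ^ ((i:ℕ)+(i:ℕ)) = 1 := by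
      rw [← two_mul, pow_mul, h2, one_pow]
    have h1' : (-1:ℂ) ^ (i:ℕ) * (-1:ℂ) ^ (i:ℕ) = 1 := by
      rw [← pow_add, ← two_mul, pow_mul]; norm_num
    rw [h1, one_mul]
    exact h1'
  · rw [if_neg (fun h => hij (Fin.ext h)), if_neg hij, mul_zero]

lemma jordan_decomp (mu : ℂ) (n : ℕ) :
    jordanBlock mu n = mu • (1 : Matrix (Fin n) (Fin n) ℂ) + jordanBlock 0 n := by
  ext i j
  simp only [jordanBlock, Matrix.add_apply, Matrix.smul_apply, Matrix.one_apply, Matrix.of_apply,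
    smul_eq_mul, Fin.ext_iff]
  split_ifs with h1 h2 h3 h4 h5 <;> (try (exfalso; omega)) <;> ring

lemma N_apply {n : ℕ} (l j : Fin n) :
    (jordanBlock 0 n) l j = if (j:ℕ) = (l:ℕ)+1 then 1 else 0 := by
  simp only [jordanBlock, Matrix.of_apply]
  by_cases h : (j:ℕ) = (l:ℕ)
  · rw [if_pos h, if_neg (by omega)]
  · rw [if_neg h]

lemma N_mul_apply {n : ℕ} (M : Matrix (Fin n) (Fin n) ℂ) (i j : Fin n) :
    (jordanBlock 0 n * M) i j = if h : (i:ℕ)+1 < n then M ⟨(i:ℕ)+1, h⟩ j else 0 := by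
  rw [Matrix.mul_apply]
  simp only [N_apply]
  by_cases h : (i:ℕ)+1 < n
  · rw [dif_pos h, Finset.sum_eq_single (⟨(i:ℕ)+1, h⟩ : Fin n)]
    · rw [if_pos rfl, one_mul]
    · intro b _ hb
      rw [if_neg (fun hh => hb (Fin.ext hh)), zero_mul]
    · intro hmem; exact absurd (Finset.mem_univ _) hmem
  · rw [dif_neg h]
    refine Finset.sum_eq_zero fun b _ => ?_
    rw [if_neg (by omega), zero_mul]

lemma mul_N_apply {n : ℕ} (M : Matrix (Fin n) (Fin n) ℂ) (i j : Fin n) :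
    (M * jordanBlock 0 n) i j = if h : 0 < (j:ℕ) then M i ⟨(j:ℕ)-1, by omega⟩ else 0 := by
  rw [Matrix.mul_apply]
  simp only [N_apply]
  by_cases h : 0 < (j:ℕ)
  · rw [dif_pos h, Finset.sum_eq_single (⟨(j:ℕ)-1, by omega⟩ : Fin n)]
    · rw [if_pos (by simp; omega), mul_one]
    · intro b _ hb
      rw [if_neg (fun hh => hb (Fin.ext (by simp; omega))), mul_zero]
    · intro hmem; exact absurd (Finset.mem_univ _) hmem
  · rw [dif_neg h]
    refine Finset.sum_eq_zero fun b _ => ?_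
    rw [if_neg (by omega), mul_zero]


lemma cross_zero {mu : ℂ} (h2 : mu^2 = 1) (n : ℕ) :
    mu • (Gm mu n * jordanBlock 0 n) + mu • (jordanBlock 0 n * Gm mu n) +
      jordanBlock 0 n * Gm mu n * jordanBlock 0 n = 0 := by
  ext i j
  simp only [Matrix.add_apply, Matrix.smul_apply, Matrix.zero_apply, smul_eq_mul]
  rw [mul_N_apply, N_mul_apply, mul_N_apply]
  by_cases h1 : (i:ℕ)+1 < n <;> by_cases hj : 0 < (j:ℕ)
  · rw [dif_pos hj, dif_pos h1, dif_pos hj, N_mul_apply, dif_pos h1]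
    obtain ⟨b', hb⟩ : ∃ b', (j:ℕ) = b'+1 := ⟨(j:ℕ)-1, by omega⟩
    simp only [Gm_apply, Fin.val_mk]
    rw [hb]
    simp only [Nat.add_sub_cancel]
    have hps : (((b'+1).choose ((i:ℕ)+1) : ℕ) : ℂ)
        = ((b'.choose (i:ℕ) : ℕ) : ℂ) + ((b'.choose ((i:ℕ)+1) : ℕ) : ℂ) := by
      exact_mod_cast Nat.choose_succ_succ b' (i:ℕ)
    rw [hps]
    linear_combination (-((-1:ℂ)^b') * mu^((i:ℕ)+b'+1) *
      (((b'.choose (i:ℕ) : ℕ) : ℂ) + ((b'.choose ((i:ℕ)+1) : ℕ) : ℂ))) * h2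
  · rw [dif_neg hj, dif_pos h1, dif_neg hj]
    have : ((j:ℕ).choose ((i:ℕ)+1)) = 0 := Nat.choose_eq_zero_of_lt (by omega)
    simp [Gm_apply, this]
  · rw [dif_pos hj, dif_neg h1, dif_pos hj, N_mul_apply, dif_neg h1]
    have : (((j:ℕ)-1).choose (i:ℕ)) = 0 := Nat.choose_eq_zero_of_lt (by omega)
    simp [Gm_apply, this]
  · rw [dif_neg hj, dif_neg h1, dif_neg hj]
    simp

lemma jordan_Gm_jordan {mu : ℂ} (h2 : mu^2 = 1) (n : ℕ) :
    jordanBlock mu n * Gm mu n * jordanBlock mu n = Gm mu n := by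
  have hc := cross_zero h2 n
  rw [jordan_decomp mu n]
  have expand : (mu • (1 : Matrix (Fin n) (Fin n) ℂ) + jordanBlock 0 n) * Gm mu n *
      (mu • (1 : Matrix (Fin n) (Fin n) ℂ) + jordanBlock 0 n)
      = (mu^2) • Gm mu n + (mu • (Gm mu n * jordanBlock 0 n) +
          mu • (jordanBlock 0 n * Gm mu n) +
          jordanBlock 0 n * Gm mu n * jordanBlock 0 n) := by
    simp only [add_mul, mul_add, smul_mul_assoc, mul_smul_comm, one_mul, mul_one, smul_add,
      smul_smul, ← pow_two]
    abel
  rw [expand, hc, add_zero, h2, one_smul]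

lemma Gm_lower {mu : ℂ} {n : ℕ} (i j : Fin n) (h : (j:ℕ) < (i:ℕ)) : Gm mu n i j = 0 := by
  simp [Gm_apply, Nat.choose_eq_zero_of_lt h]

lemma Gm_diag {mu : ℂ} (h2 : mu^2 = 1) {n : ℕ} (i : Fin n) : Gm mu n i i = (-1:ℂ)^(i:ℕ) := by
  rw [Gm_apply, ← two_mul, pow_mul, h2, one_pow, one_mul, Nat.choose_self, Nat.cast_one, mul_one]

lemma lower_mul {n : ℕ} {X Y : Matrix (Fin n) (Fin n) ℂ}
    (hX : ∀ i j : Fin n, (j:ℕ) < (i:ℕ) → X i j = 0)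
    (hY : ∀ i j : Fin n, (j:ℕ) < (i:ℕ) → Y i j = 0) :
    ∀ i j : Fin n, (j:ℕ) < (i:ℕ) → (X * Y) i j = 0 := by
  intro i j h
  rw [Matrix.mul_apply]
  refine Finset.sum_eq_zero fun l _ => ?_
  rcases lt_or_ge (l:ℕ) (i:ℕ) with hl | hl
  · rw [hX i l hl, zero_mul]
  · rw [hY l j (by omega), mul_zero]

lemma diag_mul {n : ℕ} {X Y : Matrix (Fin n) (Fin n) ℂ}
    (hX : ∀ i j : Fin n, (j:ℕ) < (i:ℕ) → X i j = 0)
    (hY : ∀ i j : Fin n, (j:ℕ) < (i:ℕ) → Y i j = 0) (i : Fin n) :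
    (X * Y) i i = X i i * Y i i := by
  rw [Matrix.mul_apply]
  rw [Finset.sum_eq_single i (fun l _ hl => ?_) (fun h => absurd (Finset.mem_univ _) h)]
  rcases lt_or_ge (l:ℕ) (i:ℕ) with hcase | hcase
  · rw [hX i l hcase, zero_mul]
  · have hlt : (i:ℕ) < (l:ℕ) := lt_of_le_of_ne hcase (fun hh => hl (Fin.ext hh.symm))
    rw [hY l i hlt, mul_zero]

lemma det_of_lower {n : ℕ} {X : Matrix (Fin n) (Fin n) ℂ}
    (hX : ∀ i j : Fin n, (j:ℕ) < (i:ℕ) → X i j = 0) :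
    X.det = ∏ i, X i i := by
  apply Matrix.det_of_upperTriangular
  intro i j h
  exact hX i j h

lemma det_Gm {mu : ℂ} (h2 : mu^2 = 1) (n : ℕ) :
    (Gm mu n).det = (-1:ℂ) ^ (∑ i ∈ range n, i) := by
  rw [det_of_lower (fun i j h => Gm_lower i j h)]
  have : ∀ i : Fin n, Gm mu n i i = (-1:ℂ)^(i:ℕ) := Gm_diag h2
  rw [Finset.prod_congr rfl (fun i _ => this i), Finset.prod_pow_eq_pow_sum]
  rw [← Fin.sum_univ_eq_sum_range (fun i => i) n]


section comm
variable {n : ℕ} {k : Matrix (Fin n) (Fin n) ℂ}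

lemma comm_rel (hk : k * jordanBlock 0 n = jordanBlock 0 n * k)
    (a b : ℕ) (ha : a < n) (hb : b + 1 < n) :
    k ⟨a, ha⟩ ⟨b, by omega⟩
      = if h : a + 1 < n then k ⟨a+1, h⟩ ⟨b+1, hb⟩ else 0 := by
  have h0 := congrFun (congrFun hk ⟨a, ha⟩) ⟨b+1, hb⟩
  rw [mul_N_apply, N_mul_apply] at h0
  rw [dif_pos (show 0 < ((⟨b+1, hb⟩ : Fin n):ℕ) by simp)] at h0
  simp only [Fin.val_mk, Nat.add_sub_cancel] at h0
  exact h0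

lemma comm_lower_aux (hk : k * jordanBlock 0 n = jordanBlock 0 n * k) :
    ∀ (t a b : ℕ) (ha : a < n) (hb : b < n), n - 1 - a ≤ t → b < a →
      k ⟨a, ha⟩ ⟨b, hb⟩ = 0 := by
  intro t
  induction t with
  | zero =>
    intro a b ha hb hta hba
    have hb1 : b + 1 < n := by omega
    rw [comm_rel hk a b ha hb1, dif_neg (by omega)]
  | succ t ih =>
    intro a b ha hb hta hba
    have hb1 : b + 1 < n := by omega
    rw [comm_rel hk a b ha hb1]
    by_cases h : a + 1 < n
    · rw [dif_pos h]
      exact ih (a+1) (b+1) h hb1 (by omega) (by omega)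
    · rw [dif_neg h]

lemma comm_lower (hk : k * jordanBlock 0 n = jordanBlock 0 n * k) :
    ∀ i j : Fin n, (j:ℕ) < (i:ℕ) → k i j = 0 := by
  intro i j h
  have := comm_lower_aux hk (n - 1 - (i:ℕ)) (i:ℕ) (j:ℕ) i.isLt j.isLt le_rfl h
  simpa using this

lemma comm_diag (hn : 0 < n) (hk : k * jordanBlock 0 n = jordanBlock 0 n * k) :
    ∀ (a : ℕ) (ha : a < n), k ⟨a, ha⟩ ⟨a, ha⟩ = k ⟨0, hn⟩ ⟨0, hn⟩ := by
  intro a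
  induction a with
  | zero => intro _; rfl
  | succ a ih =>
    intro ha
    have haa : a < n := by omega
    have := comm_rel hk a a haa ha
    rw [dif_pos ha] at this
    rw [← this]
    exact ih haa

end comm


lemma S_parity (n : ℕ) :
    (∑ i ∈ range n, i) % 2 = if n % 4 = 0 ∨ n % 4 = 1 then 0 else 1 := by
  induction n with
  | zero => simp
  | succ n ih =>
    rw [Finset.sum_range_succ]
    split_ifs at ih ⊢ with h1 h2 <;> omega

end JBaux

open JBaux

/-- For `μ ∈ {1, -1}` with `A = J(μ, n) ∈ SL(n, ℂ)`: `A` is always reversible in `SL(n, ℂ)`,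
and `A` is strongly reversible in `SL(n, ℂ)` iff `n ≢ 2 (mod 4)`. -/
theorem jordanBlock_reversible_and_strongly_reversible_iff {n : ℕ} (hn : 1 ≤ n)
    (mu : ℂ) (hmu : mu = 1 ∨ mu = -1)
    (hdet : (jordanBlock mu n).det = 1)
    (A : Matrix.SpecialLinearGroup (Fin n) ℂ) (hA : A = ⟨jordanBlock mu n, hdet⟩) :
    (∃ g : Matrix.SpecialLinearGroup (Fin n) ℂ, g * A * g⁻¹ = A⁻¹) ∧
    ((∃ g₁ g₂ : Matrix.SpecialLinearGroup (Fin n) ℂ,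
        g₁ * g₁ = 1 ∧ g₂ * g₂ = 1 ∧ A = g₁ * g₂) ↔ n % 4 ≠ 2) := by
  subst hA
  have hn0 : 0 < n := hn
  have h2 : mu ^ 2 = 1 := by rcases hmu with rfl | rfl <;> norm_num
  set J : Matrix (Fin n) (Fin n) ℂ := jordanBlock mu n with hJ
  set G : Matrix (Fin n) (Fin n) ℂ := Gm mu n with hG
  have hGG : G * G = 1 := Gm_mul_Gm h2 n
  have hJGJ : J * G * J = G := jordan_Gm_jordan h2 n
  set S : ℕ := ∑ i ∈ range n, i with hSdef
  have hdetG : G.det = (-1 : ℂ) ^ S := det_Gm h2 n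
  set a : Matrix.SpecialLinearGroup (Fin n) ℂ := ⟨jordanBlock mu n, hdet⟩ with ha
  have hcoe_a : (a : Matrix (Fin n) (Fin n) ℂ) = J := rfl
  have hSp := S_parity n
  rw [← hSdef] at hSp
  constructor
  · -- reversibility
    obtain ⟨c, hc⟩ : ∃ c : ℂ, c ^ n * (-1 : ℂ) ^ S = 1 := by
      have h4 : n % 4 = 0 ∨ n % 4 = 1 ∨ n % 4 = 2 ∨ n % 4 = 3 := by omega
      rcases h4 with h4 | h4 | h4 | h4
      · refine ⟨1, ?_⟩
        rw [if_pos (Or.inl h4)] at hSp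
        have hES : Even S := ⟨S / 2, by omega⟩
        rw [one_pow, Even.neg_one_pow hES, one_mul]
      · refine ⟨1, ?_⟩
        rw [if_pos (Or.inr h4)] at hSp
        have hES : Even S := ⟨S / 2, by omega⟩
        rw [one_pow, Even.neg_one_pow hES, one_mul]
      · refine ⟨Complex.I, ?_⟩
        rw [if_neg (by omega)] at hSp
        obtain ⟨m, hm⟩ : ∃ m, n = 4 * m + 2 := ⟨n / 4, by omega⟩
        have hOS : Odd S := ⟨S / 2, by omega⟩
        rw [Odd.neg_one_pow hOS, hm, pow_add, pow_mul]
        norm_num [Complex.I_sq]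
      · refine ⟨-1, ?_⟩
        rw [if_neg (by omega)] at hSp
        have hOS : Odd S := ⟨S / 2, by omega⟩
        have hOn : Odd n := ⟨n / 2, by omega⟩
        rw [Odd.neg_one_pow hOS, Odd.neg_one_pow hOn]
        norm_num
    have hdetr : (c • G).det = 1 := by
      rw [Matrix.det_smul, Fintype.card_fin, hdetG, hc]
    refine ⟨⟨c • G, hdetr⟩, ?_⟩
    set r : Matrix.SpecialLinearGroup (Fin n) ℂ := ⟨c • G, hdetr⟩ with hr
    have hara : a * r * a = r := by
      apply Subtype.ext
      show J * (c • G) * J = c • G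
      rw [Matrix.mul_smul, Matrix.smul_mul, hJGJ]
    have h1 : r * a = a⁻¹ * r := by
      calc r * a = a⁻¹ * (a * r * a) := by group
        _ = a⁻¹ * r := by rw [hara]
    rw [h1]; group
  · constructor
    · -- necessity
      rintro ⟨g₁, g₂, hg1, hg2, hfac⟩ hmod2
      set h : Matrix (Fin n) (Fin n) ℂ := (g₁ : Matrix (Fin n) (Fin n) ℂ) with hh0
      have hh : h * h = 1 := by
        have := congrArg (fun x : Matrix.SpecialLinearGroup (Fin n) ℂ =>
          (x : Matrix (Fin n) (Fin n) ℂ)) hg1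
        simpa using this
      have e1 : g₁ * a * g₁ = g₂ * g₁ := by
        rw [hfac, ← mul_assoc, hg1, one_mul]
      have e2 : a * (g₁ * a * g₁) = 1 := by
        rw [e1, hfac, mul_assoc, ← mul_assoc g₂ g₂ g₁, hg2, one_mul, hg1]
      have hJh : J * (h * J * h) = 1 := by
        have := congrArg (fun x : Matrix.SpecialLinearGroup (Fin n) ℂ =>
          (x : Matrix (Fin n) (Fin n) ℂ)) e2
        simpa using this
      have hGJ : J * (G * J * G) = 1 := by
        rw [← mul_assoc, ← mul_assoc, hJGJ, hGG]
      have hswap : (h * J * h) * J = 1 := mul_eq_one_comm.mp hJh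
      have huniq : h * J * h = G * J * G := by
        calc h * J * h = (h * J * h) * (J * (G * J * G)) := by rw [hGJ, mul_one]
          _ = ((h * J * h) * J) * (G * J * G) := by simp only [mul_assoc]
          _ = G * J * G := by rw [hswap, one_mul]
      set k : Matrix (Fin n) (Fin n) ℂ := G * h with hk0
      have hhJ : h * J = G * J * G * h := by
        calc h * J = (h * J * h) * h := by rw [mul_assoc, hh, mul_one]
          _ = G * J * G * h := by rw [huniq]
      have hkJ : k * J = J * k := by
        calc k * J = G * (h * J) := by rw [hk0, mul_assoc]
          _ = G * (G * J * G * h) := by rw [hhJ]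
          _ = (G * G) * J * (G * h) := by simp only [mul_assoc]
          _ = J * k := by rw [hGG, one_mul, hk0]
      have hkN : k * jordanBlock 0 n = jordanBlock 0 n * k := by
        have hd := jordan_decomp mu n
        rw [← hJ] at hd
        have := hkJ
        rw [hd, mul_add, add_mul, Matrix.mul_smul, Matrix.smul_mul, mul_one, one_mul] at this
        exact add_left_cancel this
      have tri_k := comm_lower hkN
      have tri_G : ∀ i j : Fin n, (j:ℕ) < (i:ℕ) → G i j = 0 := fun i j hij => Gm_lower i j hij
      obtain ⟨c, hc0⟩ : ∃ c : ℂ, k ⟨0, hn0⟩ ⟨0, hn0⟩ = c := ⟨_, rfl⟩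
      have hGk : G * k = h := by rw [hk0, ← mul_assoc, hGG, one_mul]
      have hGzz : G ⟨0, hn0⟩ ⟨0, hn0⟩ = 1 := by
        rw [hG, Gm_diag h2]
        norm_num
      have hc2 : c * c = 1 := by
        have hent := congrFun (congrFun (show (G * k) * (G * k) = 1 by rw [hGk]; exact hh)
          ⟨0, hn0⟩) ⟨0, hn0⟩
        rw [diag_mul (lower_mul tri_G tri_k) (lower_mul tri_G tri_k),
          diag_mul tri_G tri_k, Matrix.one_apply_eq, hGzz, one_mul, hc0] at hent
        exact hent
      have hdiag : ∀ i : Fin n, k i i = c := by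
        intro i
        have := comm_diag hn0 hkN (i:ℕ) i.isLt
        rw [hc0] at this
        simpa using this
      have hdetk : k.det = c ^ n := by
        rw [det_of_lower tri_k, Finset.prod_congr rfl (fun i _ => hdiag i),
          Finset.prod_const, Finset.card_univ, Fintype.card_fin]
      have hdeth : h.det = 1 := g₁.prop
      have hfinal : h.det = (-1 : ℂ) ^ S * c ^ n := by
        rw [← hGk, Matrix.det_mul, hdetG, hdetk]
      rw [hdeth] at hfinal
      have hSodd : (-1 : ℂ) ^ S = -1 := by
        rw [if_neg (by omega)] at hSp
        have hOS : Odd S := ⟨S / 2, by omega⟩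
        exact Odd.neg_one_pow hOS
      have hcn : c ^ n = 1 := by
        rcases mul_self_eq_one_iff.mp hc2 with rfl | rfl
        · rw [one_pow]
        · have hEn : Even n := ⟨n / 2, by omega⟩
          exact Even.neg_one_pow hEn
      rw [hSodd, hcn, mul_one] at hfinal
      norm_num at hfinal
    · -- construction
      intro hmod
      obtain ⟨s, hs2, hsdet⟩ : ∃ s : ℂ, s * s = 1 ∧ s ^ n * (-1 : ℂ) ^ S = 1 := by
        have h4 : n % 4 = 0 ∨ n % 4 = 1 ∨ n % 4 = 3 := by omega
        rcases h4 with h4 | h4 | h4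
        · refine ⟨1, by norm_num, ?_⟩
          rw [if_pos (Or.inl h4)] at hSp
          have hES : Even S := ⟨S / 2, by omega⟩
          rw [one_pow, Even.neg_one_pow hES, one_mul]
        · refine ⟨1, by norm_num, ?_⟩
          rw [if_pos (Or.inr h4)] at hSp
          have hES : Even S := ⟨S / 2, by omega⟩
          rw [one_pow, Even.neg_one_pow hES, one_mul]
        · refine ⟨-1, by norm_num, ?_⟩
          rw [if_neg (by omega)] at hSp
          have hOS : Odd S := ⟨S / 2, by omega⟩
          have hOn : Odd n := ⟨n / 2, by omega⟩
          rw [Odd.neg_one_pow hOS, Odd.neg_one_pow hOn]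
          norm_num
      have hdetg1 : (s • G).det = 1 := by
        rw [Matrix.det_smul, Fintype.card_fin, hdetG, hsdet]
      set g₁ : Matrix.SpecialLinearGroup (Fin n) ℂ := ⟨s • G, hdetg1⟩ with hg1def
      have hg1 : g₁ * g₁ = 1 := by
        apply Subtype.ext
        show (s • G) * (s • G) = 1
        rw [Matrix.smul_mul, Matrix.mul_smul, smul_smul, hGG, hs2, one_smul]
      have haga : a * g₁ * a = g₁ := by
        apply Subtype.ext
        show J * (s • G) * J = s • G
        rw [Matrix.mul_smul, Matrix.smul_mul, hJGJ]
      refine ⟨g₁, g₁ * a, hg1, ?_, ?_⟩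
      · calc (g₁ * a) * (g₁ * a) = g₁ * (a * g₁ * a) := by
              rw [mul_assoc, ← mul_assoc a g₁ a]
          _ = g₁ * g₁ := by rw [haga]
          _ = 1 := hg1
      · rw [← mul_assoc, hg1, one_mul]
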